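/- There do not exist two positive integers (squares) y² and z² such that both y² + z² and z² − y² are perfect squares of positive integers; equivalently, there are no positive integers x, y, z, t with x² + y² = z² and y² + z² = t². -/

import Mathlib

/-- Inner descent step: `c⁴ + 4d⁴ = z²` with `c` odd, coprime to `d ≠ 0`, yields a smaller
solution of `f⁴ + c² = e⁴`. -/
lemma inner_step {c d z : ℤ} (hz : 0 < z) (hodd : c % 2 = 1) (hd : d ≠ 0)
    (hco : IsCoprime c d) (h : c ^ 4 + 4 * d ^ 4 = z ^ 2) :
    ∃ e f : ℤ, f ≠ 0 ∧ f ^ 4 + c ^ 2 = e ^ 4 ∧ e.natAbs < z.natAbs := by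
  have hcodd : Odd c := Int.odd_iff.mpr hodd
  have hc2odd : c ^ 2 % 2 = 1 := Int.odd_iff.mp (hcodd.pow)
  have htriple : PythagoreanTriple (c ^ 2) (2 * d ^ 2) z := by
    unfold PythagoreanTriple; nlinarith [h]
  have hcop : Int.gcd (c ^ 2) (2 * d ^ 2) = 1 := by
    apply Int.isCoprime_iff_gcd_eq_one.mp
    have h2 : IsCoprime (c ^ 2) 2 := by
      obtain ⟨j, hj⟩ := (hcodd.pow : Odd (c ^ 2))
      exact ⟨1, -j, by linarith⟩
    exact h2.mul_right hco.pow
  obtain ⟨m, n, hc2, hd2, hzmn, hmn, _, hm0⟩ :=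
    htriple.coprime_classification' hcop hc2odd hz
  have hd2' : m * n = d ^ 2 := by linarith
  have hmnpos : 0 < m * n := by rw [hd2']; exact sq_pos_of_ne_zero hd
  have hmpos : 0 < m := by nlinarith [hmnpos, sq_nonneg n]
  have hnpos : 0 < n := by nlinarith [hmnpos]
  have hmncop : IsCoprime m n := Int.isCoprime_iff_gcd_eq_one.mpr hmn
  obtain ⟨e, he⟩ := Int.sq_of_isCoprime hmncop hd2'
  have hme : m = e ^ 2 := by
    rcases he with h' | h'
    · exact h'
    · exfalso; nlinarith [sq_nonneg e]
  obtain ⟨f, hf⟩ := Int.sq_of_isCoprime hmncop.symm (by linarith [hd2'] : n * m = d ^ 2)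
  have hnf : n = f ^ 2 := by
    rcases hf with h' | h'
    · exact h'
    · exfalso; nlinarith [sq_nonneg f]
  have hfne : f ≠ 0 := by
    intro h0; rw [h0] at hnf; simp at hnf; omega
  have heq : f ^ 4 + c ^ 2 = e ^ 4 := by
    have : c ^ 2 = e ^ 4 - f ^ 4 := by rw [hc2, hme, hnf]; ring
    linarith
  refine ⟨e, f, hfne, heq, ?_⟩
  have hene : e ≠ 0 := by intro h0; rw [h0] at hme; simp at hme; omega
  have h1 : (1 : ℤ) ≤ |e| := by
    rcases abs_pos.mpr hene with h'; omega
  have habs : |e| < z := by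
    have he2 : |e| ^ 2 = m := by rw [sq_abs, ← hme]
    nlinarith [hzmn, hnpos, h1]
  have : (e.natAbs : ℤ) < (z.natAbs : ℤ) := by
    rw [← Int.abs_eq_natAbs, ← Int.abs_eq_natAbs, abs_of_pos hz]
    exact habs
  exact_mod_cast this

/-- Fermat's right-triangle theorem (descent form): no nontrivial `y⁴ + k² = z⁴`. -/
lemma no_fourth_diff_sq : ∀ N : ℕ, ∀ z y k : ℤ, z.natAbs = N → y ≠ 0 → k ≠ 0 →
    y ^ 4 + k ^ 2 = z ^ 4 → False := by
  intro N
  induction N using Nat.strong_induction_on with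
  | _ N IH =>
  intro z₀ y k hN hy hk heq₀
  have hzne : z₀ ≠ 0 := by
    intro h0
    rw [h0] at heq₀
    nlinarith [pow_pos (abs_pos.mpr hy) 4, sq_nonneg k, abs_pos.mpr hy,
      sq_abs y, sq_nonneg y]
  obtain ⟨z, hzpos, hzN, heq⟩ : ∃ z : ℤ, 0 < z ∧ z.natAbs = N ∧ y ^ 4 + k ^ 2 = z ^ 4 := by
    refine ⟨|z₀|, abs_pos.mpr hzne, by rw [Int.natAbs_abs]; exact hN, ?_⟩
    have : |z₀| ^ 4 = z₀ ^ 4 := by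
      rw [show |z₀| ^ 4 = (|z₀| ^ 2) ^ 2 by ring, sq_abs]; ring
    rw [this]; exact heq₀
  clear heq₀ hN hzne
  rcases Nat.lt_or_ge 1 (Int.gcd y z) with hg1 | hg1
  · -- 1 < gcd : divide through
    set g : ℕ := Int.gcd y z with hg
    obtain ⟨y₁, hy₁⟩ : (g : ℤ) ∣ y := Int.gcd_dvd_left _ _
    obtain ⟨z₁, hz₁⟩ : (g : ℤ) ∣ z := Int.gcd_dvd_right _ _
    have hgz : (g : ℤ) ≠ 0 := by
      simp only [ne_eq, Int.natCast_eq_zero]; omega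
    have hk4 : ((g : ℤ) ^ 2) ^ 2 ∣ k ^ 2 := by
      refine ⟨z₁ ^ 4 - y₁ ^ 4, ?_⟩
      have hkz : k ^ 2 = z ^ 4 - y ^ 4 := by linarith
      rw [hkz, hy₁, hz₁]; ring
    obtain ⟨k₁, hk₁⟩ : (g : ℤ) ^ 2 ∣ k := (Int.pow_dvd_pow_iff two_ne_zero).mp hk4
    have heq₁ : y₁ ^ 4 + k₁ ^ 2 = z₁ ^ 4 := by
      have h4 : ((g : ℤ)) ^ 4 ≠ 0 := pow_ne_zero _ hgz
      apply mul_left_cancel₀ h4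
      have h5 : ((g:ℤ) * y₁) ^ 4 + ((g:ℤ) ^ 2 * k₁) ^ 2 = ((g:ℤ) * z₁) ^ 4 := by
        rw [← hy₁, ← hk₁, ← hz₁]; exact heq
      linear_combination h5
    have hy₁ne : y₁ ≠ 0 := by rintro rfl; simp at hy₁; exact hy hy₁
    have hk₁ne : k₁ ≠ 0 := by rintro rfl; simp at hk₁; exact hk hk₁
    have hz₁ne : z₁ ≠ 0 := by rintro rfl; simp at hz₁; omega
    have hlt : z₁.natAbs < N := by
      rw [← hzN, hz₁, Int.natAbs_mul, Int.natAbs_natCast]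
      have h6 := Int.natAbs_pos.mpr hz₁ne
      nlinarith [h6, hg1]
    exact IH z₁.natAbs hlt z₁ y₁ k₁ rfl hy₁ne hk₁ne heq₁
  · -- coprime case
    have hgcd : Int.gcd y z = 1 := by
      have : Int.gcd y z ≠ 0 := by
        simp only [ne_eq, Int.gcd_eq_zero_iff, not_and_or]
        left; exact hy
      omega
    have hco : IsCoprime y z := Int.isCoprime_iff_gcd_eq_one.mpr hgcd
    have hcoyk : IsCoprime y k := by
      have h1 : IsCoprime y (z ^ 4) := hco.pow_right
      have h2 : IsCoprime y (z ^ 4 + y * (-(y ^ 3))) := h1.add_mul_left_right _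
      have h3 : IsCoprime y (k ^ 2) := by
        have hke : k ^ 2 = z ^ 4 + y * (-(y ^ 3)) := by linarith
        rwa [hke]
      exact (IsCoprime.pow_right_iff two_pos).mp h3
    rcases Int.even_or_odd y with hye | hyo
    · -- y even : use triple (k, y², z²)
      have hzodd : Odd z := by
        rcases Int.even_or_odd z with hze | hzo
        · exfalso
          obtain ⟨a, ha⟩ := hye
          obtain ⟨b, hb⟩ := hze
          obtain ⟨u, v, huv⟩ := hco
          have : (2 : ℤ) ∣ 1 := ⟨u * a + v * b, by rw [← huv, ha, hb]; ring⟩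
          norm_num at this
        · exact hzo
      have hkodd : k % 2 = 1 := by
        rcases Int.even_or_odd k with hke | hko
        · exfalso
          have h1 : ¬ Even (z ^ 4) := by
            rw [Int.even_pow]
            rintro ⟨h', -⟩
            exact (Int.not_even_iff_odd.mpr hzodd) h'
          have h2 : Even (y ^ 4) := Int.even_pow.mpr ⟨hye, by norm_num⟩
          have h3 : Even (k ^ 2) := Int.even_pow.mpr ⟨hke, by norm_num⟩
          exact h1 (heq ▸ h2.add h3)
        · exact Int.odd_iff.mp hko
      have htriple : PythagoreanTriple k (y ^ 2) (z ^ 2) := by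
        unfold PythagoreanTriple; linear_combination heq
      have hcop : Int.gcd k (y ^ 2) = 1 :=
        Int.isCoprime_iff_gcd_eq_one.mp (hcoyk.symm.pow_right)
      have hz2 : (0 : ℤ) < z ^ 2 := by positivity
      obtain ⟨m, n, hkmn, hy2, hz2e, hmn, hpar, hm0⟩ :=
        htriple.coprime_classification' hcop hkodd hz2
      have hmnpos : 0 < m * n := by nlinarith [sq_pos_of_ne_zero hy, hy2]
      have hmpos : 0 < m :=
        lt_of_le_of_ne hm0 (fun h0 => by rw [← h0] at hmnpos; simp at hmnpos)
      have hnpos : 0 < n := by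
        by_contra h'
        push_neg at h'
        have := mul_nonpos_of_nonneg_of_nonpos hmpos.le h'
        linarith
      have hmnco : IsCoprime m n := Int.isCoprime_iff_gcd_eq_one.mpr hmn
      obtain ⟨y₁, hy1⟩ := hye
      rcases hpar with ⟨hm2, hn2⟩ | ⟨hm2, hn2⟩
      · -- m even
        obtain ⟨m₁, hm1⟩ : (2 : ℤ) ∣ m := (Int.even_iff.mpr hm2).two_dvd
        have hprod : m₁ * n = y₁ ^ 2 := by
          apply mul_left_cancel₀ (by norm_num : (4:ℤ) ≠ 0)
          linear_combination (-1 : ℤ) * hy2 - 2 * n * hm1 + (y + 2 * y₁) * hy1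
        have hm₁pos : 0 < m₁ := by linarith [hm1, hmpos]
        have hm₁nco : IsCoprime m₁ n := by
          have h7 : IsCoprime (2 * m₁) n := by rwa [← hm1]
          exact IsCoprime.of_mul_left_right h7
        obtain ⟨a, ha⟩ := Int.sq_of_isCoprime hm₁nco hprod
        have hma : m₁ = a ^ 2 := by
          rcases ha with h' | h'
          · exact h'
          · exfalso; linarith [sq_nonneg a]
        obtain ⟨b, hb⟩ := Int.sq_of_isCoprime hm₁nco.symm
          (by linarith [hprod] : n * m₁ = y₁ ^ 2)
        have hnb : n = b ^ 2 := by
          rcases hb with h' | h'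
          · exact h'
          · exfalso; linarith [sq_nonneg b]
        have hbodd : b % 2 = 1 := by
          rcases Int.even_or_odd b with h' | h'
          · exfalso
            obtain ⟨j, hj⟩ := h'
            have hne : Even n := ⟨2 * j ^ 2, by rw [hnb, hj]; ring⟩
            rw [Int.even_iff] at hne; omega
          · exact Int.odd_iff.mp h'
        have hane : a ≠ 0 := by intro h0; rw [h0] at hma; simp at hma; omega
        have habco : IsCoprime b a := by
          have h8 : IsCoprime (a ^ 2) (b ^ 2) := by rwa [← hma, ← hnb]
          exact (((IsCoprime.pow_left_iff two_pos).mp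
            ((IsCoprime.pow_right_iff two_pos).mp h8)).symm)
        have hinner : b ^ 4 + 4 * a ^ 4 = z ^ 2 := by
          rw [hz2e, hm1, hma, hnb]; ring
        obtain ⟨e, f, hf, hfeq, hlt⟩ := inner_step hzpos hbodd hane habco hinner
        have hbne : b ≠ 0 := by intro h0; rw [h0] at hbodd; norm_num at hbodd
        exact IH e.natAbs (hzN ▸ hlt) e f b rfl hf hbne hfeq
      · -- n even
        obtain ⟨n₁, hn1⟩ : (2 : ℤ) ∣ n := (Int.even_iff.mpr hn2).two_dvd
        have hprod : m * n₁ = y₁ ^ 2 := by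
          apply mul_left_cancel₀ (by norm_num : (4:ℤ) ≠ 0)
          linear_combination (-1 : ℤ) * hy2 - 2 * m * hn1 + (y + 2 * y₁) * hy1
        have hn₁pos : 0 < n₁ := by linarith [hn1, hnpos]
        have hmn₁co : IsCoprime m n₁ := by
          have h7 : IsCoprime m (2 * n₁) := by rwa [← hn1]
          exact IsCoprime.of_mul_right_right h7
        obtain ⟨a, ha⟩ := Int.sq_of_isCoprime hmn₁co hprod
        have hma : m = a ^ 2 := by
          rcases ha with h' | h'
          · exact h'
          · exfalso; linarith [sq_nonneg a]
        obtain ⟨b, hb⟩ := Int.sq_of_isCoprime hmn₁co.symm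
          (by linarith [hprod] : n₁ * m = y₁ ^ 2)
        have hnb : n₁ = b ^ 2 := by
          rcases hb with h' | h'
          · exact h'
          · exfalso; linarith [sq_nonneg b]
        have haodd : a % 2 = 1 := by
          rcases Int.even_or_odd a with h' | h'
          · exfalso
            obtain ⟨j, hj⟩ := h'
            have hme : Even m := ⟨2 * j ^ 2, by rw [hma, hj]; ring⟩
            rw [Int.even_iff] at hme; omega
          · exact Int.odd_iff.mp h'
        have hbne : b ≠ 0 := by intro h0; rw [h0] at hnb; simp at hnb; omega
        have habco : IsCoprime a b := by
          have h8 : IsCoprime (a ^ 2) (b ^ 2) := by rwa [← hma, ← hnb]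
          exact ((IsCoprime.pow_left_iff two_pos).mp
            ((IsCoprime.pow_right_iff two_pos).mp h8))
        have hinner : a ^ 4 + 4 * b ^ 4 = z ^ 2 := by
          rw [hz2e, hn1, hma, hnb]; ring
        obtain ⟨e, f, hf, hfeq, hlt⟩ := inner_step hzpos haodd hbne habco hinner
        have hane : a ≠ 0 := by intro h0; rw [h0] at haodd; norm_num at haodd
        exact IH e.natAbs (hzN ▸ hlt) e f a rfl hf hane hfeq
    · -- y odd : use triple (y², k, z²)
      have hy2odd : y ^ 2 % 2 = 1 := Int.odd_iff.mp hyo.pow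
      have htriple : PythagoreanTriple (y ^ 2) k (z ^ 2) := by
        unfold PythagoreanTriple; linear_combination heq
      have hcop : Int.gcd (y ^ 2) k = 1 :=
        Int.isCoprime_iff_gcd_eq_one.mp (hcoyk.pow_left)
      have hz2 : (0 : ℤ) < z ^ 2 := by positivity
      obtain ⟨m, n, hy2e, hke, hz2e, hmn, hpar, hm0⟩ :=
        htriple.coprime_classification' hcop hy2odd hz2
      have hnne : n ≠ 0 := by
        rintro rfl; rw [hke] at hk; simp at hk
      have heqnew : n ^ 4 + (y * z) ^ 2 = m ^ 4 := by
        have h9 : (y * z) ^ 2 = (m ^ 2 - n ^ 2) * (m ^ 2 + n ^ 2) := by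
          rw [mul_pow, hy2e, hz2e]
        linear_combination h9
      have hyzne : y * z ≠ 0 := mul_ne_zero hy (by positivity)
      have hlt : m.natAbs < N := by
        have hm2lt : m ^ 2 < z ^ 2 := by nlinarith [sq_pos_of_ne_zero hnne]
        have habs : |m| < z := abs_lt_of_sq_lt_sq hm2lt hzpos.le
        have h10 : (m.natAbs : ℤ) < (z.natAbs : ℤ) := by
          rw [← Int.abs_eq_natAbs, ← Int.abs_eq_natAbs, abs_of_pos hzpos]
          exact habs
        rw [← hzN]; exact_mod_cast h10
      exact IH m.natAbs hlt m n (y * z) rfl hnne hyzne heqnew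

/-- There are no two positive squares `y²`, `z²` such that both their sum and their
difference are again squares of positive integers; equivalently, there are no positive
integers `x, y, z, t` with `x² + y² = z²` and `y² + z² = t²`. -/
theorem no_sum_and_difference_of_squares :
    ¬ ∃ x y z t : ℕ, 0 < x ∧ 0 < y ∧ 0 < z ∧ 0 < t ∧
      x ^ 2 + y ^ 2 = z ^ 2 ∧ y ^ 2 + z ^ 2 = t ^ 2 := by
  rintro ⟨x, y, z, t, hx, hy, hz, ht, h1, h2⟩
  have h1' : (x : ℤ) ^ 2 + (y : ℤ) ^ 2 = (z : ℤ) ^ 2 := by exact_mod_cast h1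
  have h2' : (y : ℤ) ^ 2 + (z : ℤ) ^ 2 = (t : ℤ) ^ 2 := by exact_mod_cast h2
  have key : (y : ℤ) ^ 4 + ((x : ℤ) * (t : ℤ)) ^ 2 = (z : ℤ) ^ 4 := by
    have hx2 : (x : ℤ) ^ 2 = (z : ℤ) ^ 2 - (y : ℤ) ^ 2 := by linarith
    have ht2 : (t : ℤ) ^ 2 = (y : ℤ) ^ 2 + (z : ℤ) ^ 2 := by linarith
    have : ((x : ℤ) * (t : ℤ)) ^ 2
        = ((z : ℤ) ^ 2 - (y : ℤ) ^ 2) * ((y : ℤ) ^ 2 + (z : ℤ) ^ 2) := by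
      rw [mul_pow, hx2, ht2]
    linear_combination this
  have hyne : (y : ℤ) ≠ 0 := by exact_mod_cast hy.ne'
  have hxtne : (x : ℤ) * (t : ℤ) ≠ 0 := by
    apply mul_ne_zero <;> exact_mod_cast (by omega : ¬ _ = 0)
  exact no_fourth_diff_sq (z : ℤ).natAbs (z : ℤ) (y : ℤ) ((x : ℤ) * (t : ℤ))
    rfl hyne hxtne key
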